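/- Reduction of causal-team consequence to generalized-causal-team consequence: For any set Γ ∪ {ψ} of CO⩗[σ]-formulas: Γ ⊨^c ψ if and only if Γ ∪ { ⩗_{F∈𝔽σ} Φ^F } ⊨^g ψ, where 𝔽σ is the finite set of all systems of functions over σ and the displayed disjunction is intuitionistic. -/

import Mathlib

open scoped Classical
set_option linter.unusedSectionVars false

noncomputable section

/-- Assignments of values to variables. -/
abbrev Asg (V : Type) (Val : V → Type) : Type := (v : V) → Val v

/-- A recursive system of functions over the signature `(V, Val)`:
each endogenous variable `v ∈ En` has a parent set `pa v` and a function `fn v`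
computing its value from the values of its parents; recursiveness says that the
induced causal graph is acyclic. -/
structure Sys (V : Type) (Val : V → Type) : Type where
  En : Finset V
  pa : V → Finset V
  fn : (v : V) → ((w : V) → w ∈ pa v → Val w) → Val v
  recursive : ∀ x : V, ¬ Relation.TransGen (fun a b => b ∈ En ∧ a ∈ pa b) x x

variable {V : Type} [Fintype V] [DecidableEq V] [Nonempty V]
  {Val : V → Type} [∀ v, Fintype (Val v)] [∀ v, DecidableEq (Val v)] [∀ v, Nonempty (Val v)]

namespace CausalTeam

/-- The edge relation of the causal graph of a system of functions. -/
@[reducible] def Edge (F : Sys V Val) (a b : V) : Prop := b ∈ F.En ∧ a ∈ F.pa b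

theorem wfEdge (F : Sys V Val) : WellFounded (Edge F) := by
  have h2 : WellFounded (Relation.TransGen (Edge F)) := by
    have hirr : IsIrrefl V (Relation.TransGen (Edge F)) := ⟨F.recursive⟩
    have htr : IsTrans V (Relation.TransGen (Edge F)) :=
      ⟨fun _ _ _ h h' => Relation.TransGen.trans h h'⟩
    exact Finite.wellFounded_of_trans_of_irrefl _
  exact Subrelation.wf (fun h => Relation.TransGen.single h) h2

/-- An assignment is compatible with a system of functions if every endogenous
variable takes the value prescribed by its function. -/
def Compat (F : Sys V Val) (s : Asg V Val) : Prop :=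
  ∀ v ∈ F.En, s v = F.fn v (fun w _ => s w)

/-- The variables occurring in a conjunction of equations `𝐗 = 𝐱`. -/
def ikeys (I : List ((v : V) × Val v)) : List V := I.map Sigma.fst

/-- A conjunction of equations is consistent if it contains no pair `X = x`, `X = x'`
with distinct values `x ≠ x'`. -/
def IConsistent (I : List ((v : V) × Val v)) : Prop :=
  ∀ p ∈ I, ∀ q ∈ I, p.1 = q.1 → p = q

/-- Look up the (first) value assigned to a variable by a conjunction of equations. -/
def ilookup : List ((v : V) × Val v) → (v : V) → Option (Val v)
  | [], _ => none
  | p :: I, v => if h : p.1 = v then some (h ▸ p.2) else ilookup I v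

/-- The intervened system of functions `F_{𝐗=𝐱}`: the restriction of `F` to `En(F) ∖ 𝐗`. -/
def doSys (F : Sys V Val) (I : List ((v : V) × Val v)) : Sys V Val where
  En := F.En.filter (fun v => v ∉ ikeys I)
  pa := F.pa
  fn := F.fn
  recursive := by
    intro x hx
    refine F.recursive x (Relation.TransGen.mono ?_ x x hx)
    intro a b hab
    exact ⟨(Finset.mem_filter.mp hab.1).1, hab.2⟩

/-- The intervened assignment `s_{𝐗=𝐱}`: variables in `𝐗` get the prescribed values,
exogenous variables outside `𝐗` keep their values, and endogenous variables outside `𝐗`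
are recomputed (recursively) by their functions. -/
def doAsg (F : Sys V Val) (I : List ((v : V) × Val v)) (s : Asg V Val) : Asg V Val :=
  (wfEdge F).fix (C := fun v => Val v) fun v ih =>
    match ilookup I v with
    | some x => x
    | none => if h : v ∈ F.En then F.fn v (fun w hw => ih w ⟨h, hw⟩) else s v

/-- Formulas of the languages CO[σ], CO⩗[σ] and COD[σ]:
equations `X = x`, dependence atoms `=(𝐗;Y)`, negation, conjunction,
tensor disjunction `∨`, intuitionistic disjunction `⩗`, and counterfactuals `𝐗=𝐱 □→ φ`. -/
inductive Fml (V : Type) (Val : V → Type) : Type where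
  | eq : (v : V) → Val v → Fml V Val
  | dep : List V → V → Fml V Val
  | neg : Fml V Val → Fml V Val
  | and : Fml V Val → Fml V Val → Fml V Val
  | or : Fml V Val → Fml V Val → Fml V Val
  | ior : Fml V Val → Fml V Val → Fml V Val
  | cf : List ((v : V) × Val v) → Fml V Val → Fml V Val

/-- CO[σ]-formulas: equations, closed under ¬, ∧, ∨ and counterfactuals. -/
inductive IsCO : Fml V Val → Prop where
  | eq (v : V) (x : Val v) : IsCO (Fml.eq v x)
  | neg {φ} : IsCO φ → IsCO (Fml.neg φ)
  | and {φ ψ} : IsCO φ → IsCO ψ → IsCO (Fml.and φ ψ)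
  | or {φ ψ} : IsCO φ → IsCO ψ → IsCO (Fml.or φ ψ)
  | cf {φ} (I : List ((v : V) × Val v)) : IsCO φ → IsCO (Fml.cf I φ)

/-- CO⩗[σ]-formulas: additionally closed under ⩗; negation applies to CO-formulas only. -/
inductive IsCOV : Fml V Val → Prop where
  | eq (v : V) (x : Val v) : IsCOV (Fml.eq v x)
  | neg {φ} : IsCO φ → IsCOV (Fml.neg φ)
  | and {φ ψ} : IsCOV φ → IsCOV ψ → IsCOV (Fml.and φ ψ)
  | or {φ ψ} : IsCOV φ → IsCOV ψ → IsCOV (Fml.or φ ψ)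
  | ior {φ ψ} : IsCOV φ → IsCOV ψ → IsCOV (Fml.ior φ ψ)
  | cf {φ} (I : List ((v : V) × Val v)) : IsCOV φ → IsCOV (Fml.cf I φ)

/-- COD[σ]-formulas: additionally allow dependence atoms; negation applies to
CO-formulas only. -/
inductive IsCOD : Fml V Val → Prop where
  | eq (v : V) (x : Val v) : IsCOD (Fml.eq v x)
  | dep (X : List V) (Y : V) : IsCOD (Fml.dep X Y)
  | neg {φ} : IsCO φ → IsCOD (Fml.neg φ)
  | and {φ ψ} : IsCOD φ → IsCOD ψ → IsCOD (Fml.and φ ψ)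
  | or {φ ψ} : IsCOD φ → IsCOD ψ → IsCOD (Fml.or φ ψ)
  | cf {φ} (I : List ((v : V) × Val v)) : IsCOD φ → IsCOD (Fml.cf I φ)

/-- Satisfaction over causal teams `(Tm, F)` (the causal team semantics `⊨^c`). -/
def satC : Set (Asg V Val) → Sys V Val → Fml V Val → Prop
  | Tm, _, Fml.eq v x => ∀ s ∈ Tm, s v = x
  | Tm, _, Fml.dep X Y => ∀ s ∈ Tm, ∀ t ∈ Tm, (∀ w ∈ X, s w = t w) → s Y = t Y
  | Tm, F, Fml.neg φ => ∀ s ∈ Tm, ¬ satC {s} F φ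
  | Tm, F, Fml.and φ ψ => satC Tm F φ ∧ satC Tm F ψ
  | Tm, F, Fml.or φ ψ => ∃ T1 T2 : Set (Asg V Val), T1 ∪ T2 = Tm ∧ satC T1 F φ ∧ satC T2 F ψ
  | Tm, F, Fml.ior φ ψ => satC Tm F φ ∨ satC Tm F ψ
  | Tm, F, Fml.cf I φ => IConsistent I → satC (doAsg F I '' Tm) (doSys F I) φ

/-- Satisfaction over generalized causal teams (the semantics `⊨^g`). -/
def satG : Set (Asg V Val × Sys V Val) → Fml V Val → Prop
  | T, Fml.eq v x => ∀ p ∈ T, p.1 v = x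
  | T, Fml.dep X Y => ∀ p ∈ T, ∀ q ∈ T, (∀ w ∈ X, p.1 w = q.1 w) → p.1 Y = q.1 Y
  | T, Fml.neg φ => ∀ p ∈ T, ¬ satG {p} φ
  | T, Fml.and φ ψ => satG T φ ∧ satG T ψ
  | T, Fml.or φ ψ => ∃ T1 T2 : Set (Asg V Val × Sys V Val), T1 ∪ T2 = T ∧ satG T1 φ ∧ satG T2 ψ
  | T, Fml.ior φ ψ => satG T φ ∨ satG T ψ
  | T, Fml.cf I φ => IConsistent I →
      satG ((fun p : Asg V Val × Sys V Val => (doAsg p.2 I p.1, doSys p.2 I)) '' T) φ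

/-- A generalized causal team: a set of pairs `(s, F)` with `s` compatible with `F`. -/
def GTOk (T : Set (Asg V Val × Sys V Val)) : Prop := ∀ p ∈ T, Compat p.2 p.1

/-- The falsum `⊥`, an abbreviation for `X=x ∧ ¬(X=x)`. -/
def fBot : Fml V Val :=
  Fml.and (Fml.eq (Classical.arbitrary V) (Classical.arbitrary (Val (Classical.arbitrary V))))
    (Fml.neg (Fml.eq (Classical.arbitrary V) (Classical.arbitrary (Val (Classical.arbitrary V)))))

/-- A canonical tautology. -/
def fTop : Fml V Val := Fml.neg fBot

/-- Finite conjunction of a list of formulas. -/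
def bigAnd : List (Fml V Val) → Fml V Val
  | [] => fTop
  | [φ] => φ
  | φ :: ψ :: rest => Fml.and φ (bigAnd (ψ :: rest))

/-- Finite tensor disjunction of a list of formulas. -/
def bigOr : List (Fml V Val) → Fml V Val
  | [] => fBot
  | [φ] => φ
  | φ :: ψ :: rest => Fml.or φ (bigOr (ψ :: rest))

/-- Finite intuitionistic disjunction of a list of formulas. -/
def bigIor : List (Fml V Val) → Fml V Val
  | [] => fBot
  | [φ] => φ
  | φ :: ψ :: rest => Fml.ior φ (bigIor (ψ :: rest))

/-- The conjunction of equations describing the restriction of the assignment `t`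
to the set `S` of variables. -/
def eqList (S : Finset V) (t : Asg V Val) : List ((v : V) × Val v) :=
  S.toList.map (fun w => ⟨w, t w⟩)

/-- The list of all assignments over the signature. -/
def allAsg : List (Asg V Val) := (Finset.univ : Finset (Asg V Val)).toList

/-- `η(v)`: for every tuple of values for the variables other than `v`, intervening
with those values forces `v` to take the value computed by `F.fn v` from the parents. -/
def eta (F : Sys V Val) (v : V) : Fml V Val :=
  bigAnd (allAsg.map (fun t =>
    Fml.cf (eqList (Finset.univ.erase v) t) (Fml.eq v (F.fn v (fun w _ => t w)))))

/-- `ξ(v)`: the value of `v` is unaffected by interventions on all other variables. -/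
def xi (v : V) : Fml V Val :=
  bigAnd ((Finset.univ : Finset (Val v)).toList.map (fun x =>
    bigAnd (allAsg.map (fun t =>
      Fml.or (Fml.neg (Fml.eq v x))
        (Fml.cf (eqList (Finset.univ.erase v) t) (Fml.eq v x))))))

/-- `Cn(F)`: the endogenous variables of `F` governed by a constant function. -/
def Cn (F : Sys V Val) : Finset V :=
  F.En.filter (fun v => ∃ c : Val v, ∀ p, F.fn v p = c)

/-- The non-constant endogenous variables `En(F) ∖ Cn(F)`. -/
def strictEn (F : Sys V Val) : Finset V := F.En \ Cn F

/-- `F_v ∼ G_v`: equivalence of the two functions for `v` up to dummy arguments. -/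
def SimFn (F G : Sys V Val) (v : V) : Prop :=
  ∀ (x : (w : V) → w ∈ F.pa v ∩ G.pa v → Val w)
    (y : (w : V) → w ∈ F.pa v \ G.pa v → Val w)
    (z : (w : V) → w ∈ G.pa v \ F.pa v → Val w),
    F.fn v (fun w hw =>
      if h : w ∈ G.pa v then x w (Finset.mem_inter.mpr ⟨hw, h⟩)
      else y w (Finset.mem_sdiff.mpr ⟨hw, h⟩)) =
    G.fn v (fun w hw =>
      if h : w ∈ F.pa v then x w (Finset.mem_inter.mpr ⟨h, hw⟩)
      else z w (Finset.mem_sdiff.mpr ⟨hw, h⟩))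

/-- `F ∼ G`: equivalence of systems of functions up to dummy arguments. -/
def Sim (F G : Sys V Val) : Prop :=
  strictEn F = strictEn G ∧ ∀ v ∈ strictEn F, SimFn F G v

/-- The CO[σ]-formula `Φ^F` characterizing the function component `F` up to `∼`. -/
def Phi (F : Sys V Val) : Fml V Val :=
  Fml.and (bigAnd (F.En.toList.map (fun v => eta F v)))
    (bigAnd ((((Finset.univ : Finset V) \ F.En) ∪ Cn F).toList.map (fun v => xi v)))

/-- The CO[σ]-formula `Θ^A`: the team component is included in `A`. -/
def Theta (A : Finset (Asg V Val)) : Fml V Val :=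
  bigOr (A.toList.map (fun s =>
    bigAnd ((Finset.univ : Finset V).toList.map (fun v => Fml.eq v (s v)))))

/-- `χ₁`: all variables are constant in the team. -/
def chi1 : Fml V Val :=
  bigAnd ((Finset.univ : Finset V).toList.map (fun v => Fml.dep [] v))

/-- `χ_k`: the team has at most `k` elements. -/
def chi : ℕ → Fml V Val
  | 0 => fBot
  | 1 => chi1
  | (k+2) => Fml.or chi1 (chi (k+1))

/-! ### Auxiliary development -/

theorem doAsg_eq (F : Sys V Val) (I : List ((v : V) × Val v)) (s : Asg V Val) (v : V) :
    doAsg F I s v =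
      match ilookup I v with
      | some x => x
      | none => if _ : v ∈ F.En then F.fn v (fun w _ => doAsg F I s w) else s v := by
  unfold doAsg
  rw [WellFounded.fix_eq]

theorem doAsg_eq_some (F : Sys V Val) (I : List ((v : V) × Val v)) (s : Asg V Val) (v : V)
    (x : Val v) (h : ilookup I v = some x) : doAsg F I s v = x := by
  rw [doAsg_eq, h]

theorem doAsg_eq_none (F : Sys V Val) (I : List ((v : V) × Val v)) (s : Asg V Val) (v : V)
    (h : ilookup I v = none) :
    doAsg F I s v = if _ : v ∈ F.En then F.fn v (fun w _ => doAsg F I s w) else s v := by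
  rw [doAsg_eq, h]

theorem ilookup_eqList (S : Finset V) (t : Asg V Val) (v : V) :
    ilookup (eqList S t) v = if v ∈ S then some (t v) else none := by
  rw [eqList]
  have : ∀ l : List V, ilookup (l.map fun w => (⟨w, t w⟩ : (v : V) × Val v)) v
      = if v ∈ l then some (t v) else none := by
    intro l
    induction l with
    | nil => simp [ilookup]
    | cons w l ih =>
      simp only [List.map_cons, ilookup]
      by_cases h : w = v
      · subst h; simp
      · simp only [dif_neg h, ih, List.mem_cons]
        by_cases h' : v ∈ l <;> simp [h', Ne.symm h]
  rw [this]
  simp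

theorem iconsistent_eqList (S : Finset V) (t : Asg V Val) : IConsistent (eqList S t) := by
  intro p hp q hq h
  simp only [eqList, List.mem_map] at hp hq
  obtain ⟨w, _, rfl⟩ := hp
  obtain ⟨w', _, rfl⟩ := hq
  cases h
  rfl

theorem mem_ikeys_eqList (S : Finset V) (t : Asg V Val) (v : V) :
    v ∈ ikeys (eqList S t) ↔ v ∈ S := by
  simp [ikeys, eqList]

theorem ilookup_eq_none (I : List ((v : V) × Val v)) (v : V) :
    ilookup I v = none ↔ v ∉ ikeys I := by
  induction I with
  | nil => simp [ilookup, ikeys]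
  | cons p I ih =>
    rw [show ikeys (p :: I) = p.1 :: ikeys I from rfl]
    simp only [ilookup, List.mem_cons]
    by_cases h : p.1 = v
    · simp [h]
    · rw [dif_neg h, ih]
      simp [Ne.symm h]

theorem not_mem_pa_self (F : Sys V Val) (v : V) (hv : v ∈ F.En) : v ∉ F.pa v :=
  fun h => F.recursive v (Relation.TransGen.single ⟨hv, h⟩)

/-- The value that the pair `(s, F)` assigns to `v` in the full context `t`. -/
def Fexpr (F : Sys V Val) (s : Asg V Val) (v : V) (t : Asg V Val) : Val v :=
  if v ∈ F.En then F.fn v (fun w _ => t w) else s v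

/-- `(s, G)` agrees with the system `F` pointwise in every full context. -/
def Agree (F : Sys V Val) (s : Asg V Val) (G : Sys V Val) : Prop :=
  ∀ v t, Fexpr G s v t = Fexpr F s v t

theorem eq_of_eq_on_deps {α : Type} (h : Asg V Val → α) (D : Set V)
    (hD : ∀ w ∉ D, ∀ t x, h (Function.update t w x) = h t) :
    ∀ t t' : Asg V Val, (∀ w ∈ D, t w = t' w) → h t = h t' := by
  have key : ∀ n (t t' : Asg V Val),
      (Finset.univ.filter (fun w => t w ≠ t' w)).card ≤ n →
      (∀ w ∈ D, t w = t' w) → h t = h t' := by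
    intro n
    induction n with
    | zero =>
      intro t t' hc _
      have hall : ∀ w, t w = t' w := by
        intro w
        by_contra hw
        have hmem : w ∈ Finset.univ.filter (fun w => t w ≠ t' w) := by simp [hw]
        have := Finset.card_pos.mpr ⟨w, hmem⟩
        omega
      exact congrArg h (funext hall)
    | succ n ih =>
      intro t t' hc hagree
      by_cases hall : ∀ w, t w = t' w
      · exact congrArg h (funext hall)
      · push_neg at hall
        obtain ⟨w, hw⟩ := hall
        have hwD : w ∉ D := fun hwD => hw (hagree w hwD)
        rw [← hD w hwD t (t' w)]
        have hwmem : w ∈ Finset.univ.filter (fun u => t u ≠ t' u) := by simp [hw]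
        apply ih
        · have hsub : (Finset.univ.filter (fun u => Function.update t w (t' w) u ≠ t' u)) ⊆
              (Finset.univ.filter (fun u => t u ≠ t' u)).erase w := by
            intro u hu
            simp only [Finset.mem_filter, Finset.mem_univ, true_and] at hu
            rcases eq_or_ne u w with rfl | hne
            · simp at hu
            · refine Finset.mem_erase.mpr ⟨hne, ?_⟩
              rw [Function.update_of_ne hne] at hu
              simp [hu]
          have h1 := Finset.card_le_card hsub
          have h2 := Finset.card_erase_of_mem hwmem
          have h3 := Finset.card_pos.mpr ⟨w, hwmem⟩
          omega
        · intro u hu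
          rcases eq_or_ne u w with rfl | hne
          · simp
          · rw [Function.update_of_ne hne]; exact hagree u hu
  intro t t'
  exact key _ t t' le_rfl

theorem doAsg_cross (F G : Sys V Val) (s : Asg V Val) (hAg : Agree F s G)
    (I : List ((v : V) × Val v)) : doAsg G I s = doAsg F I s := by
  have hsub : ∀ w v : V,
      (∃ t x, Fexpr F s v (Function.update t w x) ≠ Fexpr F s v t) → Edge F w v := by
    rintro w v ⟨t, x, hne⟩
    by_cases hv : v ∈ F.En
    · refine ⟨hv, ?_⟩
      by_contra hw
      apply hne
      simp only [Fexpr, if_pos hv]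
      congr 1
      funext u hu
      exact Function.update_of_ne (fun he => hw (by rwa [he] at hu)) _ _
    · exact absurd (by simp [Fexpr, hv]) hne
  have wfR : WellFounded
      (fun w v : V => ∃ t x, Fexpr F s v (Function.update t w x) ≠ Fexpr F s v t) :=
    Subrelation.wf (fun {w v} hr => hsub w v hr) (wfEdge F)
  funext v
  induction v using WellFounded.induction wfR with
  | _ v ih =>
  rw [doAsg_eq F, doAsg_eq G]
  cases hl : ilookup I v with
  | some x => rfl
  | none =>
    show Fexpr G s v (doAsg G I s) = Fexpr F s v (doAsg F I s)
    rw [hAg v]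
    refine eq_of_eq_on_deps (Fexpr F s v)
      {w | ∃ t x, Fexpr F s v (Function.update t w x) ≠ Fexpr F s v t} ?_ _ _ ?_
    · intro w hw t x
      by_contra hne
      exact hw ⟨t, x, hne⟩
    · intro w hw
      exact ih w hw

/-- Under a full intervention fixing all variables other than `v` to `t`, the value of `v`
is the one computed by `Fexpr`. -/
theorem doAsg_full (G : Sys V Val) (s : Asg V Val) (v : V) (t : Asg V Val) :
    doAsg G (eqList (Finset.univ.erase v) t) s v = Fexpr G s v t := by
  have hnone : ilookup (eqList (Finset.univ.erase v) t) v = none := by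
    rw [ilookup_eqList, if_neg (by simp)]
  rw [doAsg_eq_none _ _ _ _ hnone, Fexpr]
  by_cases hvG : v ∈ G.En
  · rw [dif_pos hvG, if_pos hvG]
    congr 1
    funext w hw
    have hwv : w ≠ v := fun he => not_mem_pa_self G v hvG (he ▸ hw)
    exact doAsg_eq_some _ _ _ _ _ (by rw [ilookup_eqList, if_pos (by simp [hwv])])
  · rw [dif_neg hvG, if_neg hvG]

theorem agree_doSys (F G : Sys V Val) (s : Asg V Val) (hAg : Agree F s G)
    (I : List ((v : V) × Val v)) :
    Agree (doSys F I) (doAsg G I s) (doSys G I) := by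
  intro v t
  have hEnG : v ∈ (doSys G I).En ↔ v ∈ G.En ∧ v ∉ ikeys I := by
    simp [doSys]
  have hEnF : v ∈ (doSys F I).En ↔ v ∈ F.En ∧ v ∉ ikeys I := by
    simp [doSys]
  by_cases hk : v ∈ ikeys I
  · rw [Fexpr, Fexpr, if_neg (fun h => (hEnG.mp h).2 hk), if_neg (fun h => (hEnF.mp h).2 hk)]
  · have hAgv := hAg v t
    have hnone : ilookup I v = none := (ilookup_eq_none I v).mpr hk
    rw [Fexpr, Fexpr] at hAgv ⊢
    by_cases hG : v ∈ G.En <;> by_cases hF : v ∈ F.En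
    · rw [if_pos (hEnG.mpr ⟨hG, hk⟩), if_pos (hEnF.mpr ⟨hF, hk⟩)]
      rw [if_pos hG, if_pos hF] at hAgv
      exact hAgv
    · -- v endogenous only in G : both sides equal s v
      rw [if_pos (hEnG.mpr ⟨hG, hk⟩), if_neg (fun h => hF (hEnF.mp h).1)]
      rw [if_pos hG, if_neg hF] at hAgv
      show G.fn v (fun w _ => t w) = doAsg G I s v
      rw [doAsg_eq_none _ _ _ _ hnone, dif_pos hG, hAgv]
      have := hAg v (doAsg G I s)
      rw [Fexpr, Fexpr, if_pos hG, if_neg hF] at this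
      exact this.symm
    · rw [if_neg (fun h => hG (hEnG.mp h).1), if_pos (hEnF.mpr ⟨hF, hk⟩)]
      rw [if_neg hG, if_pos hF] at hAgv
      show doAsg G I s v = F.fn v (fun w _ => t w)
      rw [doAsg_eq_none _ _ _ _ hnone, dif_neg hG]
      exact hAgv
    · rw [if_neg (fun h => hG (hEnG.mp h).1), if_neg (fun h => hF (hEnF.mp h).1)]

theorem compat_doAsg (G : Sys V Val) (I : List ((v : V) × Val v)) (s : Asg V Val) :
    Compat (doSys G I) (doAsg G I s) := by
  intro v hv
  have hv' : v ∈ G.En ∧ v ∉ ikeys I := by simpa [doSys] using hv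
  rw [doAsg_eq_none _ _ _ _ ((ilookup_eq_none I v).mpr hv'.2), dif_pos hv'.1]
  rfl

theorem satC_mono (φ : Fml V Val) : ∀ (T T' : Set (Asg V Val)) (F : Sys V Val),
    T' ⊆ T → satC T F φ → satC T' F φ := by
  induction φ with
  | eq v x => exact fun T T' F hsub h s hs => h s (hsub hs)
  | dep X Y => exact fun T T' F hsub h s hs t ht => h s (hsub hs) t (hsub ht)
  | neg φ _ => exact fun T T' F hsub h s hs => h s (hsub hs)
  | and φ ψ ihφ ihψ =>
    exact fun T T' F hsub h => ⟨ihφ T T' F hsub h.1, ihψ T T' F hsub h.2⟩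
  | or φ ψ ihφ ihψ =>
    rintro T T' F hsub ⟨T1, T2, hu, h1, h2⟩
    refine ⟨T1 ∩ T', T2 ∩ T', ?_, ihφ T1 _ F Set.inter_subset_left h1,
      ihψ T2 _ F Set.inter_subset_left h2⟩
    rw [← Set.union_inter_distrib_right, hu, Set.inter_eq_self_of_subset_right hsub]
  | ior φ ψ ihφ ihψ =>
    rintro T T' F hsub (h | h)
    · exact Or.inl (ihφ T T' F hsub h)
    · exact Or.inr (ihψ T T' F hsub h)
  | cf I φ ih =>
    intro T T' F hsub h hcons
    exact ih _ _ _ (Set.image_mono hsub) (h hcons)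

theorem satG_mono (φ : Fml V Val) : ∀ T T' : Set (Asg V Val × Sys V Val),
    T' ⊆ T → satG T φ → satG T' φ := by
  induction φ with
  | eq v x => exact fun T T' hsub h p hp => h p (hsub hp)
  | dep X Y => exact fun T T' hsub h p hp q hq => h p (hsub hp) q (hsub hq)
  | neg φ _ => exact fun T T' hsub h p hp => h p (hsub hp)
  | and φ ψ ihφ ihψ =>
    exact fun T T' hsub h => ⟨ihφ T T' hsub h.1, ihψ T T' hsub h.2⟩
  | or φ ψ ihφ ihψ =>
    rintro T T' hsub ⟨T1, T2, hu, h1, h2⟩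
    refine ⟨T1 ∩ T', T2 ∩ T', ?_, ihφ T1 _ Set.inter_subset_left h1,
      ihψ T2 _ Set.inter_subset_left h2⟩
    rw [← Set.union_inter_distrib_right, hu, Set.inter_eq_self_of_subset_right hsub]
  | ior φ ψ ihφ ihψ =>
    rintro T T' hsub (h | h)
    · exact Or.inl (ihφ T T' hsub h)
    · exact Or.inr (ihψ T T' hsub h)
  | cf I φ ih =>
    intro T T' hsub h hcons
    exact ih _ _ (Set.image_mono hsub) (h hcons)

theorem satC_fTop (Tm : Set (Asg V Val)) (F : Sys V Val) : satC Tm F fTop :=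
  fun s _ hbot => hbot.2 s (Set.mem_singleton s) hbot.1

theorem satG_fTop (T : Set (Asg V Val × Sys V Val)) : satG T fTop :=
  fun p _ hbot => hbot.2 p (Set.mem_singleton p) hbot.1

theorem satC_bigAnd (l : List (Fml V Val)) (Tm : Set (Asg V Val)) (F : Sys V Val) :
    satC Tm F (bigAnd l) ↔ ∀ φ ∈ l, satC Tm F φ := by
  induction l with
  | nil => simpa [bigAnd] using satC_fTop Tm F
  | cons φ l ih =>
    cases l with
    | nil => simp [bigAnd]
    | cons χ l' =>
      show satC Tm F φ ∧ satC Tm F (bigAnd (χ :: l')) ↔ _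
      rw [ih]
      constructor
      · rintro ⟨h1, h2⟩ γ hγ
        rcases List.mem_cons.mp hγ with rfl | hγ
        · exact h1
        · exact h2 γ hγ
      · intro h
        exact ⟨h φ (List.mem_cons_self), fun γ hγ => h γ (List.mem_cons_of_mem _ hγ)⟩

theorem satG_bigAnd (l : List (Fml V Val)) (T : Set (Asg V Val × Sys V Val)) :
    satG T (bigAnd l) ↔ ∀ φ ∈ l, satG T φ := by
  induction l with
  | nil => simpa [bigAnd] using satG_fTop T
  | cons φ l ih =>
    cases l with
    | nil => simp [bigAnd]
    | cons χ l' =>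
      show satG T φ ∧ satG T (bigAnd (χ :: l')) ↔ _
      rw [ih]
      constructor
      · rintro ⟨h1, h2⟩ γ hγ
        rcases List.mem_cons.mp hγ with rfl | hγ
        · exact h1
        · exact h2 γ hγ
      · intro h
        exact ⟨h φ (List.mem_cons_self), fun γ hγ => h γ (List.mem_cons_of_mem _ hγ)⟩

theorem satG_bigIor_intro (T : Set (Asg V Val × Sys V Val)) (l : List (Fml V Val)) :
    ∀ φ ∈ l, satG T φ → satG T (bigIor l) := by
  induction l with
  | nil => intro φ hφ; cases hφ
  | cons ψ l ih =>
    intro φ hφ h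
    cases l with
    | nil =>
      rcases List.mem_cons.mp hφ with rfl | h'
      · exact h
      · cases h'
    | cons χ l' =>
      rcases List.mem_cons.mp hφ with rfl | h'
      · exact Or.inl h
      · exact Or.inr (ih φ h' h)

theorem satG_bigIor_elim (T : Set (Asg V Val × Sys V Val)) (l : List (Fml V Val))
    (hl : l ≠ []) (h : satG T (bigIor l)) : ∃ φ ∈ l, satG T φ := by
  induction l with
  | nil => exact absurd rfl hl
  | cons ψ l ih =>
    cases l with
    | nil => exact ⟨ψ, List.mem_cons_self, h⟩
    | cons χ l' =>
      rcases (h : satG T ψ ∨ satG T (bigIor (χ :: l'))) with h | h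
      · exact ⟨ψ, List.mem_cons_self, h⟩
      · obtain ⟨φ, hφ, hs⟩ := ih (by simp) h
        exact ⟨φ, List.mem_cons_of_mem _ hφ, hs⟩

/-- Transfer of satisfaction between a generalized causal team all of whose members
agree with `F`, and the corresponding causal team over `F`. -/
theorem transfer (φ : Fml V Val) :
    ∀ (T : Set (Asg V Val × Sys V Val)) (F : Sys V Val),
      (∀ p ∈ T, Agree F p.1 p.2) → (satG T φ ↔ satC (Prod.fst '' T) F φ) := by
  induction φ with
  | eq v x =>
    intro T F _
    constructor
    · rintro h s ⟨p, hp, rfl⟩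
      exact h p hp
    · intro h p hp
      exact h p.1 ⟨p, hp, rfl⟩
  | dep X Y =>
    intro T F _
    constructor
    · rintro h s ⟨p, hp, rfl⟩ t ⟨q, hq, rfl⟩ hXY
      exact h p hp q hq hXY
    · intro h p hp q hq hXY
      exact h p.1 ⟨p, hp, rfl⟩ q.1 ⟨q, hq, rfl⟩ hXY
  | neg φ ih =>
    intro T F hAg
    have hsingle : ∀ p ∈ T, (satG {p} φ ↔ satC {p.1} F φ) := by
      intro p hp
      have := ih {p} F (by
        rintro q hq
        rw [Set.mem_singleton_iff.mp hq]
        exact hAg p hp)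
      rwa [Set.image_singleton] at this
    constructor
    · rintro h s ⟨p, hp, rfl⟩ hc
      exact h p hp ((hsingle p hp).mpr hc)
    · intro h p hp hc
      exact h p.1 ⟨p, hp, rfl⟩ ((hsingle p hp).mp hc)
  | and φ ψ ihφ ihψ =>
    intro T F hAg
    exact and_congr (ihφ T F hAg) (ihψ T F hAg)
  | or φ ψ ihφ ihψ =>
    intro T F hAg
    constructor
    · rintro ⟨T1, T2, hu, h1, h2⟩
      refine ⟨Prod.fst '' T1, Prod.fst '' T2, by rw [← Set.image_union, hu], ?_, ?_⟩
      · exact (ihφ T1 F (fun p hp => hAg p (hu ▸ Set.mem_union_left T2 hp))).mp h1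
      · exact (ihψ T2 F (fun p hp => hAg p (hu ▸ Set.mem_union_right T1 hp))).mp h2
    · rintro ⟨S1, S2, hu, h1, h2⟩
      refine ⟨{p ∈ T | p.1 ∈ S1}, {p ∈ T | p.1 ∈ S2}, ?_, ?_, ?_⟩
      · ext p
        simp only [Set.mem_union, Set.mem_setOf_eq]
        constructor
        · rintro (⟨h, _⟩ | ⟨h, _⟩) <;> exact h
        · intro hp
          have : p.1 ∈ S1 ∪ S2 := hu ▸ ⟨p, hp, rfl⟩
          rcases this with h | h
          · exact Or.inl ⟨hp, h⟩
          · exact Or.inr ⟨hp, h⟩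
      · refine (ihφ _ F (fun p hp => hAg p hp.1)).mpr (satC_mono φ S1 _ F ?_ h1)
        rintro s ⟨p, ⟨_, hmem⟩, rfl⟩
        exact hmem
      · refine (ihψ _ F (fun p hp => hAg p hp.1)).mpr (satC_mono ψ S2 _ F ?_ h2)
        rintro s ⟨p, ⟨_, hmem⟩, rfl⟩
        exact hmem
  | ior φ ψ ihφ ihψ =>
    intro T F hAg
    exact or_congr (ihφ T F hAg) (ihψ T F hAg)
  | cf I φ ih =>
    intro T F hAg
    have hAg' : ∀ q ∈ (fun p : Asg V Val × Sys V Val =>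
        (doAsg p.2 I p.1, doSys p.2 I)) '' T, Agree (doSys F I) q.1 q.2 := by
      rintro q ⟨p, hp, rfl⟩
      exact agree_doSys F p.2 p.1 (hAg p hp) I
    have himg : Prod.fst '' ((fun p : Asg V Val × Sys V Val =>
        (doAsg p.2 I p.1, doSys p.2 I)) '' T) = doAsg F I '' (Prod.fst '' T) := by
      ext s
      constructor
      · rintro ⟨q, ⟨p, hp, rfl⟩, rfl⟩
        refine ⟨p.1, ⟨p, hp, rfl⟩, ?_⟩
        show doAsg F I p.1 = doAsg p.2 I p.1
        rw [doAsg_cross F p.2 p.1 (hAg p hp) I]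
      · rintro ⟨s', ⟨p, hp, rfl⟩, rfl⟩
        refine ⟨(doAsg p.2 I p.1, doSys p.2 I), ⟨p, hp, rfl⟩, ?_⟩
        show doAsg p.2 I p.1 = doAsg F I p.1
        rw [doAsg_cross F p.2 p.1 (hAg p hp) I]
    constructor
    · intro h hcons
      have := (ih _ (doSys F I) hAg').mp (h hcons)
      rwa [himg] at this
    · intro h hcons
      refine (ih _ (doSys F I) hAg').mpr ?_
      rw [himg]
      exact h hcons

/-- Every causal team satisfies the formula `Φ^F` describing its own system of functions. -/
theorem satC_Phi (Tm : Set (Asg V Val)) (F : Sys V Val) (hcomp : ∀ s ∈ Tm, Compat F s) :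
    satC Tm F (Phi F) := by
  refine ⟨?_, ?_⟩
  · rw [satC_bigAnd]
    intro φ hφ
    obtain ⟨v, hv, rfl⟩ := List.mem_map.mp hφ
    have hvEn : v ∈ F.En := Finset.mem_toList.mp hv
    rw [eta, satC_bigAnd]
    intro χ hχ
    obtain ⟨t, _, rfl⟩ := List.mem_map.mp hχ
    rintro _ s' ⟨s, _, rfl⟩
    show doAsg F (eqList (Finset.univ.erase v) t) s v = _
    rw [doAsg_full, Fexpr, if_pos hvEn]
  · rw [satC_bigAnd]
    intro φ hφ
    obtain ⟨v, hv, rfl⟩ := List.mem_map.mp hφ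
    have hv' : v ∉ F.En ∨ v ∈ Cn F := by
      rcases Finset.mem_union.mp (Finset.mem_toList.mp hv) with h | h
      · exact Or.inl (Finset.mem_sdiff.mp h).2
      · exact Or.inr h
    rw [xi, satC_bigAnd]
    intro χ hχ
    obtain ⟨x, _, rfl⟩ := List.mem_map.mp hχ
    rw [satC_bigAnd]
    intro χ hχ
    obtain ⟨t, _, rfl⟩ := List.mem_map.mp hχ
    refine ⟨{s ∈ Tm | s v ≠ x}, {s ∈ Tm | s v = x}, ?_, ?_, ?_⟩
    · ext s
      simp only [Set.mem_union, Set.mem_setOf_eq]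
      constructor
      · rintro (⟨h, _⟩ | ⟨h, _⟩) <;> exact h
      · intro hs
        by_cases h : s v = x
        · exact Or.inr ⟨hs, h⟩
        · exact Or.inl ⟨hs, h⟩
    · intro s hs hsat
      exact hs.2 (hsat s (Set.mem_singleton s))
    · rintro _ s' ⟨s, hs, rfl⟩
      show doAsg F (eqList (Finset.univ.erase v) t) s v = x
      rw [doAsg_full, Fexpr]
      rcases hv' with hnE | hCn
      · rw [if_neg hnE]
        exact hs.2
      · have hmem := Finset.mem_filter.mp hCn
        obtain ⟨c, hc⟩ := hmem.2
        rw [if_pos hmem.1, hc]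
        calc c = F.fn v (fun w _ => s w) := (hc _).symm
          _ = s v := (hcomp s hs.1 v hmem.1).symm
          _ = x := hs.2

/-- If a generalized causal team satisfies `Φ^F`, then every member pair agrees with `F`. -/
theorem agree_of_satG_Phi (T : Set (Asg V Val × Sys V Val)) (F : Sys V Val)
    (h : satG T (Phi F)) : ∀ p ∈ T, Agree F p.1 p.2 := by
  obtain ⟨h1, h2⟩ := (h : satG T _ ∧ satG T _)
  rw [satG_bigAnd] at h1 h2
  intro p hp v t
  by_cases hvF : v ∈ F.En
  · have hη := h1 _ (List.mem_map.mpr ⟨v, Finset.mem_toList.mpr hvF, rfl⟩)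
    rw [eta, satG_bigAnd] at hη
    have hcf := hη _ (List.mem_map.mpr ⟨t, by simp [allAsg], rfl⟩) (iconsistent_eqList _ _)
    have h3 := hcf _ (Set.mem_image_of_mem _ hp)
    show Fexpr p.2 p.1 v t = Fexpr F p.1 v t
    rw [← doAsg_full p.2 p.1 v t]
    rw [Fexpr, if_pos hvF]
    exact h3
  · have hξ := h2 _ (List.mem_map.mpr ⟨v,
      Finset.mem_toList.mpr (Finset.mem_union_left _
        (Finset.mem_sdiff.mpr ⟨Finset.mem_univ v, hvF⟩)), rfl⟩)
    rw [xi, satG_bigAnd] at hξ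
    have hx := hξ _ (List.mem_map.mpr ⟨p.1 v, Finset.mem_toList.mpr (Finset.mem_univ _), rfl⟩)
    rw [satG_bigAnd] at hx
    obtain ⟨T1, T2, hu, hn, hc⟩ := hx _ (List.mem_map.mpr ⟨t, by simp [allAsg], rfl⟩)
    have hp' : p ∈ T1 ∪ T2 := hu ▸ hp
    have hp2 : p ∈ T2 := by
      rcases hp' with hmem | hmem
      · exact absurd (fun q hq => by rw [Set.mem_singleton_iff.mp hq]) (hn p hmem)
      · exact hmem
    have h3 := hc (iconsistent_eqList _ _) _ (Set.mem_image_of_mem _ hp2)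
    show Fexpr p.2 p.1 v t = Fexpr F p.1 v t
    rw [← doAsg_full p.2 p.1 v t, Fexpr, if_neg hvF]
    exact h3

/-- A trivial system of functions over the signature. -/
def trivSys : Sys V Val where
  En := ∅
  pa _ := ∅
  fn v _ := Classical.arbitrary _
  recursive x hx := by
    cases hx with
    | single h => exact absurd h.1 (Finset.notMem_empty _)
    | tail _ h => exact absurd h.1 (Finset.notMem_empty _)

end CausalTeam

open CausalTeam

/-- **Reduction of causal-team consequence to generalized-causal-team consequence**:
for a set `Γ ∪ {ψ}` of CO⩗[σ]-formulas, `Γ ⊨^c ψ` iff `Γ, ⩗_{F ∈ 𝔽σ} Φ^F ⊨^g ψ`,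
where the list `L` enumerates all systems of functions over the signature. -/
theorem causal_consequence_iff_generalized_with_uniformity
    {V : Type} [Fintype V] [DecidableEq V] [Nonempty V]
    {Val : V → Type} [∀ v, Fintype (Val v)] [∀ v, DecidableEq (Val v)] [∀ v, Nonempty (Val v)]
    (Γ : Set (Fml V Val)) (ψ : Fml V Val) (hΓ : ∀ γ ∈ Γ, IsCOV γ) (hψ : IsCOV ψ)
    (L : List (Sys V Val)) (hL : ∀ F : Sys V Val, F ∈ L) :
    (∀ (Tm : Set (Asg V Val)) (F : Sys V Val), (∀ s ∈ Tm, Compat F s) →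
        (∀ γ ∈ Γ, satC Tm F γ) → satC Tm F ψ) ↔
    (∀ T : Set (Asg V Val × Sys V Val), GTOk T →
        (∀ γ ∈ Γ, satG T γ) → satG T (bigIor (L.map Phi)) → satG T ψ) := by
  have hLne : L ≠ [] := by
    intro h
    have := hL trivSys
    rw [h] at this
    cases this
  constructor
  · intro hcaus T hok hΓsat hior
    obtain ⟨φ, hφ, hsat⟩ := satG_bigIor_elim T _
      (fun h => hLne (List.map_eq_nil_iff.mp h)) hior
    obtain ⟨F, _, rfl⟩ := List.mem_map.mp hφ
    have hAg : ∀ p ∈ T, Agree F p.1 p.2 := agree_of_satG_Phi T F hsat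
    have hcompF : ∀ s ∈ Prod.fst '' T, Compat F s := by
      rintro s ⟨p, hp, rfl⟩ v hv
      have hag := hAg p hp v p.1
      rw [Fexpr, Fexpr, if_pos hv] at hag
      rw [← hag]
      by_cases hvG : v ∈ p.2.En
      · rw [if_pos hvG]
        exact hok p hp v hvG
      · rw [if_neg hvG]
    exact (transfer ψ T F hAg).mpr
      (hcaus (Prod.fst '' T) F hcompF (fun γ hγ => (transfer γ T F hAg).mp (hΓsat γ hγ)))
  · intro hgen Tm F hcomp hΓsat
    set T : Set (Asg V Val × Sys V Val) := (fun s => (s, F)) '' Tm with hT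
    have hAg : ∀ p ∈ T, Agree F p.1 p.2 := by
      rintro p ⟨s, hs, rfl⟩ v t
      rfl
    have hfst : Prod.fst '' T = Tm := by
      ext s
      simp [hT]
    have hok : GTOk T := by
      rintro p ⟨s, hs, rfl⟩
      exact hcomp s hs
    have hmain := hgen T hok
      (fun γ hγ => (transfer γ T F hAg).mpr (by rw [hfst]; exact hΓsat γ hγ))
      (satG_bigIor_intro T _ (Phi F) (List.mem_map_of_mem (f := Phi) (hL F))
        ((transfer _ T F hAg).mpr (by rw [hfst]; exact satC_Phi Tm F hcomp)))
    have := (transfer ψ T F hAg).mp hmain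
    rwa [hfst] at this
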